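/- (Concentration lemma for restricted free energies.) Assume the disorder law satisfies the deviation inequality with constant C. Let N be even, m ∈ {0, 2, …, N}, and let Ω_m be a set of walk paths with P(Ω_m) > 0 such that 𝒩 = m for every path in Ω_m. Then for every u ≥ 0, ℙ( F_{N,ω}(Ω_m) − E_ℙ[F_{N,ω}(Ω_m)] ≥ u ) ≤ C exp( − u² N² / (4 C λ² m) ). -/

import Mathlib

open MeasureTheory ProbabilityTheory Filter Finset

noncomputable section

/-- Indicator of a proposition. -/
def ind (p : Prop) : ℝ :=
  letI := Classical.propDecidable p
  if p then 1 else 0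

/-- Extend a finite sequence of steps (`true` = step up) to an infinite one. -/
def extendPath (N : ℕ) (ε : Fin N → Bool) : ℕ → Bool :=
  fun j => if h : j < N then ε ⟨j, h⟩ else false

/-- Position `S_n` of the simple random walk with steps `ε`. -/
def walkPos (ε : ℕ → Bool) (n : ℕ) : ℤ :=
  ∑ j ∈ Finset.range n, (if ε j then (1 : ℤ) else -1)

/-- Sign of `S_n`, with the convention `sign S_{2n} = sign S_{2n-1}` whenever `S_{2n} = 0`. -/
def sgn (ε : ℕ → Bool) (n : ℕ) : ℤ :=
  if 0 < walkPos ε n then 1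
  else if walkPos ε n < 0 then -1
  else if 0 < walkPos ε (n - 1) then 1 else -1

/-- The set of times `1 ≤ n ≤ N` spent in the lower half plane (`Δ_n = 1`). -/
def lowSet (ε : ℕ → Bool) (N : ℕ) : Finset ℕ :=
  (Finset.Icc 1 N).filter (fun n => sgn ε n = -1)

/-- `𝒩 = Σ_{n=1}^N Δ_n`, the number of monomers in the lower half plane. -/
def NVis (ε : ℕ → Bool) (N : ℕ) : ℕ := (lowSet ε N).card

/-- `max 𝒜`, the last exit point from the lower half plane (`𝒜 = lowSet ∪ {0}`). -/
def maxA (ε : ℕ → Bool) (N : ℕ) : ℕ := (lowSet ε N).sup id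

/-- Expectation, under the simple random walk law, of a function of the first `N` steps. -/
def pathE (N : ℕ) (f : (ℕ → Bool) → ℝ) : ℝ :=
  (1 / 2 : ℝ) ^ N * ∑ ε : Fin N → Bool, f (extendPath N ε)

/-- Boltzmann weight `exp(-2λ Σ_{n=1}^N (ω_n + h) Δ_n)`. -/
def weight (lam h : ℝ) (ω : ℕ → ℝ) (N : ℕ) (ε : ℕ → Bool) : ℝ :=
  Real.exp (-(2 * lam) * ∑ n ∈ lowSet ε N, (ω n + h))

/-- Restricted partition function `Z_{N,ω}(A)`. -/
def Zev (lam h : ℝ) (N : ℕ) (ω : ℕ → ℝ) (A : (ℕ → Bool) → Prop) : ℝ :=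
  pathE N (fun ε => weight lam h ω N ε * ind (A ε))

/-- Endpoint constraint: `a = true` is the constrained case `S_N = 0`, `a = false` the free one. -/
def endOK (a : Bool) (N : ℕ) (ε : ℕ → Bool) : Prop := a = true → walkPos ε N = 0

/-- Partition function `Z^a_{N,ω}` (`a = false`: free, `a = true`: constrained). -/
def Zpart (a : Bool) (lam h : ℝ) (N : ℕ) (ω : ℕ → ℝ) : ℝ :=
  Zev lam h N ω (endOK a N)

/-- Partition function `Z̃^a_{N,ω}` with the `sign` form of the Hamiltonian. -/
def Ztilde (a : Bool) (lam h : ℝ) (N : ℕ) (ω : ℕ → ℝ) : ℝ :=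
  pathE N (fun ε =>
    Real.exp (lam * ∑ n ∈ Finset.Icc 1 N, (ω n + h) * (sgn ε n : ℝ)) * ind (endOK a N ε))

/-- Polymer measure of the event `A`: `P^a_{N,ω}(A)`. -/
def polyProb (a : Bool) (lam h : ℝ) (N : ℕ) (ω : ℕ → ℝ) (A : (ℕ → Bool) → Prop) : ℝ :=
  Zev lam h N ω (fun ε => A ε ∧ endOK a N ε) / Zpart a lam h N ω

/-- Basic assumptions: `P` is the law of an IID sequence with marginal `μ`,
`μ` symmetric, of unit variance and with finite exponential moments near `0`. -/
def BasicSetup (mu : Measure ℝ) (P : Measure (ℕ → ℝ)) : Prop :=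
  IsProbabilityMeasure mu ∧ IsProbabilityMeasure P ∧
    mu.map (fun x => -x) = mu ∧
    (∫ x, x ^ 2 ∂mu) = 1 ∧
    (∃ t₀ > (0 : ℝ), ∀ t : ℝ, |t| ≤ t₀ → Integrable (fun x => Real.exp (t * x)) mu) ∧
    (∀ n : ℕ, P.map (fun ω => ω n) = mu) ∧
    iIndepFun (fun n (ω : ℕ → ℝ) => ω n) P

/-- Deviation inequality above the mean, with constant `C`, for convex Lipschitz functions
(Lipschitz with respect to the Euclidean distance) of `ω_1, …, ω_N`. -/
def DevIneq (P : Measure (ℕ → ℝ)) (C : ℝ) : Prop :=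
  0 < C ∧
    ∀ (N : ℕ) (g : (Fin N → ℝ) → ℝ) (K : ℝ), 0 ≤ K →
      ConvexOn ℝ Set.univ g →
      (∀ x y : Fin N → ℝ, |g x - g y| ≤ K * Real.sqrt (∑ i, (x i - y i) ^ 2)) →
      Integrable (fun ω => g (fun i => ω (i + 1))) P →
      ∀ t : ℝ, 0 ≤ t →
        (P {ω | (∫ ω', g (fun i => ω' (i + 1)) ∂P) + t ≤ g (fun i => ω (i + 1))}).toReal
          ≤ C * Real.exp (-t ^ 2 / (C * K ^ 2))

end

open MeasureTheory ProbabilityTheory Filter Finset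

section AuxLemmas

open Real Finset

lemma ind_nonneg' (p : Prop) : 0 ≤ ind p := by
  unfold ind; split <;> norm_num

lemma ind_of_true {p : Prop} (hp : p) : ind p = 1 := by
  unfold ind; split <;> tauto

lemma ind_of_false {p : Prop} (hp : ¬ p) : ind p = 0 := by
  unfold ind; split <;> tauto

/-- Embed a finite vector indexed by `Fin N` as `ω_1,…,ω_N`. -/
def embed (N : ℕ) (x : Fin N → ℝ) : ℕ → ℝ :=
  fun n => if hn : 1 ≤ n ∧ n ≤ N then x ⟨n - 1, by omega⟩ else 0

lemma lowSet_subset_Icc (ε : ℕ → Bool) (N : ℕ) : lowSet ε N ⊆ Finset.Icc 1 N :=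
  Finset.filter_subset _ _

lemma zev_congr (lam h : ℝ) (N : ℕ) (A : (ℕ → Bool) → Prop) (ω ω' : ℕ → ℝ)
    (hω : ∀ n ∈ Finset.Icc 1 N, ω n = ω' n) :
    Zev lam h N ω A = Zev lam h N ω' A := by
  unfold Zev pathE
  congr 1
  refine Finset.sum_congr rfl fun ε _ => ?_
  have : weight lam h ω N (extendPath N ε) = weight lam h ω' N (extendPath N ε) := by
    unfold weight
    congr 1
    congr 1
    exact Finset.sum_congr rfl fun n hn => by rw [hω n (lowSet_subset_Icc _ _ hn)]
  show weight lam h ω N (extendPath N ε) * ind (A (extendPath N ε)) = weight lam h ω' N (extendPath N ε) * ind (A (extendPath N ε))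
  rw [this]

lemma exists_path {N : ℕ} {A : (ℕ → Bool) → Prop}
    (hpos : 0 < pathE N (fun ε => ind (A ε))) :
    ∃ ε₀ : Fin N → Bool, A (extendPath N ε₀) := by
  by_contra hc
  push_neg at hc
  have : pathE N (fun ε => ind (A ε)) = 0 := by
    unfold pathE
    rw [Finset.sum_eq_zero fun ε _ => ind_of_false (hc ε), mul_zero]
  linarith

lemma sum_weight_pos (lam h : ℝ) (N : ℕ) (A : (ℕ → Bool) → Prop) (ω : ℕ → ℝ)
    (hpos : 0 < pathE N (fun ε => ind (A ε))) :
    0 < ∑ ε : Fin N → Bool, weight lam h ω N (extendPath N ε) * ind (A (extendPath N ε)) := by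
  obtain ⟨ε₀, hε₀⟩ := exists_path hpos
  refine Finset.sum_pos' (fun ε _ => mul_nonneg (le_of_lt (Real.exp_pos _)) (ind_nonneg' _))
    ⟨ε₀, Finset.mem_univ _, ?_⟩
  rw [ind_of_true hε₀, mul_one]
  exact Real.exp_pos _

lemma zev_pos (lam h : ℝ) (N : ℕ) (A : (ℕ → Bool) → Prop) (ω : ℕ → ℝ)
    (hpos : 0 < pathE N (fun ε => ind (A ε))) :
    0 < Zev lam h N ω A := by
  unfold Zev pathE
  exact mul_pos (by positivity) (sum_weight_pos lam h N A ω hpos)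

end AuxLemmas

section AuxLemmas2
open Real Finset

lemma log_zev_le (lam h : ℝ) (hlam : 0 ≤ lam) (N m : ℕ) (A : (ℕ → Bool) → Prop)
    (hA : ∀ ε, A ε → NVis ε N = m)
    (hpos : 0 < pathE N (fun ε => ind (A ε)))
    (ω ω' : ℕ → ℝ) :
    Real.log (Zev lam h N ω A) ≤
      2 * lam * Real.sqrt m * Real.sqrt (∑ n ∈ Finset.Icc 1 N, (ω n - ω' n) ^ 2)
        + Real.log (Zev lam h N ω' A) := by
  set B := 2 * lam * Real.sqrt m * Real.sqrt (∑ n ∈ Finset.Icc 1 N, (ω n - ω' n) ^ 2) with hBdef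
  have hZ : 0 < Zev lam h N ω A := zev_pos _ _ _ _ _ hpos
  have hZ' : 0 < Zev lam h N ω' A := zev_pos _ _ _ _ _ hpos
  have key : Zev lam h N ω A ≤ Real.exp B * Zev lam h N ω' A := by
    have hterm : ∀ ε : Fin N → Bool,
        weight lam h ω N (extendPath N ε) * ind (A (extendPath N ε)) ≤
          Real.exp B * (weight lam h ω' N (extendPath N ε) * ind (A (extendPath N ε))) := by
      intro ε
      by_cases hAe : A (extendPath N ε)
      · rw [ind_of_true hAe, mul_one, mul_one]
        have hcard : (lowSet (extendPath N ε) N).card = m := hA _ hAe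
        have hCS : ∑ n ∈ lowSet (extendPath N ε) N, (ω' n - ω n) ≤
            Real.sqrt m * Real.sqrt (∑ n ∈ Finset.Icc 1 N, (ω n - ω' n) ^ 2) := by
          have h1 : (∑ n ∈ lowSet (extendPath N ε) N, (ω' n - ω n)) ^ 2 ≤
              (m : ℝ) * ∑ n ∈ lowSet (extendPath N ε) N, (ω' n - ω n) ^ 2 := by
            have h0 : (∑ n ∈ lowSet (extendPath N ε) N, (ω' n - ω n)) ^ 2 ≤
                ((lowSet (extendPath N ε) N).card : ℝ) *
                  ∑ n ∈ lowSet (extendPath N ε) N, (ω' n - ω n) ^ 2 :=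
              sq_sum_le_card_mul_sum_sq
            rwa [hcard] at h0
          have h2 : ∑ n ∈ lowSet (extendPath N ε) N, (ω' n - ω n) ^ 2 ≤
              ∑ n ∈ Finset.Icc 1 N, (ω n - ω' n) ^ 2 := by
            have : ∀ n, (ω' n - ω n) ^ 2 = (ω n - ω' n) ^ 2 := fun n => by ring
            simp only [this]
            exact Finset.sum_le_sum_of_subset_of_nonneg (lowSet_subset_Icc _ _)
              (fun n _ _ => sq_nonneg _)
          calc ∑ n ∈ lowSet (extendPath N ε) N, (ω' n - ω n)
              ≤ |∑ n ∈ lowSet (extendPath N ε) N, (ω' n - ω n)| := le_abs_self _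
            _ = Real.sqrt ((∑ n ∈ lowSet (extendPath N ε) N, (ω' n - ω n)) ^ 2) :=
                (Real.sqrt_sq_eq_abs _).symm
            _ ≤ Real.sqrt ((m : ℝ) * ∑ n ∈ Finset.Icc 1 N, (ω n - ω' n) ^ 2) := by
                refine Real.sqrt_le_sqrt ?_
                refine h1.trans (mul_le_mul_of_nonneg_left h2 (by positivity))
            _ = Real.sqrt m * Real.sqrt (∑ n ∈ Finset.Icc 1 N, (ω n - ω' n) ^ 2) :=
                Real.sqrt_mul (by positivity) _
        unfold weight
        rw [← Real.exp_add]
        refine Real.exp_le_exp.mpr ?_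
        have hexpand : ∑ n ∈ lowSet (extendPath N ε) N, (ω' n - ω n) =
            (∑ n ∈ lowSet (extendPath N ε) N, (ω' n + h)) -
            (∑ n ∈ lowSet (extendPath N ε) N, (ω n + h)) := by
          rw [← Finset.sum_sub_distrib]; exact Finset.sum_congr rfl fun n _ => by ring
        have h3 : 2 * lam * ∑ n ∈ lowSet (extendPath N ε) N, (ω' n - ω n) ≤ B := by
          calc 2 * lam * ∑ n ∈ lowSet (extendPath N ε) N, (ω' n - ω n)
              ≤ 2 * lam * (Real.sqrt m * Real.sqrt (∑ n ∈ Finset.Icc 1 N, (ω n - ω' n) ^ 2)) :=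
                mul_le_mul_of_nonneg_left hCS (by positivity)
            _ = B := by rw [hBdef]; ring
        rw [hexpand] at h3
        linarith
      · simp [ind_of_false hAe]
    unfold Zev pathE
    calc (1 / 2 : ℝ) ^ N * ∑ ε : Fin N → Bool,
          weight lam h ω N (extendPath N ε) * ind (A (extendPath N ε))
        ≤ (1 / 2 : ℝ) ^ N * ∑ ε : Fin N → Bool,
            Real.exp B * (weight lam h ω' N (extendPath N ε) * ind (A (extendPath N ε))) :=
          mul_le_mul_of_nonneg_left (Finset.sum_le_sum fun ε _ => hterm ε) (by positivity)
      _ = Real.exp B * ((1 / 2 : ℝ) ^ N * ∑ ε : Fin N → Bool,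
            weight lam h ω' N (extendPath N ε) * ind (A (extendPath N ε))) := by
          rw [← Finset.mul_sum]; ring
  calc Real.log (Zev lam h N ω A) ≤ Real.log (Real.exp B * Zev lam h N ω' A) :=
        Real.log_le_log hZ key
    _ = B + Real.log (Zev lam h N ω' A) := by
        rw [Real.log_mul (Real.exp_ne_zero _) (ne_of_gt hZ'), Real.log_exp]

lemma zev_holder (lam h : ℝ) (N : ℕ) (A : (ℕ → Bool) → Prop)
    (hpos : 0 < pathE N (fun ε => ind (A ε)))
    (ω₁ ω₂ : ℕ → ℝ) (a b : ℝ) (ha : 0 ≤ a) (hb : 0 ≤ b) (hab : a + b = 1) :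
    Zev lam h N (fun n => a * ω₁ n + b * ω₂ n) A ≤
      Zev lam h N ω₁ A ^ a * Zev lam h N ω₂ A ^ b := by
  classical
  set p : (Fin N → Bool) → ℝ :=
    fun ε => weight lam h ω₁ N (extendPath N ε) * ind (A (extendPath N ε)) with hp
  set q : (Fin N → Bool) → ℝ :=
    fun ε => weight lam h ω₂ N (extendPath N ε) * ind (A (extendPath N ε)) with hq
  have hpnn : ∀ ε, 0 ≤ p ε := fun ε => mul_nonneg (le_of_lt (Real.exp_pos _)) (ind_nonneg' _)
  have hqnn : ∀ ε, 0 ≤ q ε := fun ε => mul_nonneg (le_of_lt (Real.exp_pos _)) (ind_nonneg' _)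
  have hterm : ∀ ε : Fin N → Bool,
      weight lam h (fun n => a * ω₁ n + b * ω₂ n) N (extendPath N ε) *
        ind (A (extendPath N ε)) = p ε ^ a * q ε ^ b := by
    intro ε
    by_cases hAe : A (extendPath N ε)
    · have hI : ind (A (extendPath N ε)) = 1 := ind_of_true hAe
      simp only [hp, hq, hI, mul_one]
      unfold weight
      have hsum : ∑ n ∈ lowSet (extendPath N ε) N, (a * ω₁ n + b * ω₂ n + h) =
          a * (∑ n ∈ lowSet (extendPath N ε) N, (ω₁ n + h)) +
          b * (∑ n ∈ lowSet (extendPath N ε) N, (ω₂ n + h)) := by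
        rw [Finset.mul_sum, Finset.mul_sum, ← Finset.sum_add_distrib]
        refine Finset.sum_congr rfl fun n _ => ?_
        have hh' : h = a * h + b * h := by rw [← add_mul, hab, one_mul]
        linear_combination hh'
      rw [hsum]
      have : -(2 * lam) * (a * (∑ n ∈ lowSet (extendPath N ε) N, (ω₁ n + h)) +
          b * (∑ n ∈ lowSet (extendPath N ε) N, (ω₂ n + h))) =
          (-(2 * lam) * ∑ n ∈ lowSet (extendPath N ε) N, (ω₁ n + h)) * a +
          (-(2 * lam) * ∑ n ∈ lowSet (extendPath N ε) N, (ω₂ n + h)) * b := by ring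
      rw [this, Real.exp_add, Real.rpow_def_of_pos (Real.exp_pos _),
        Real.rpow_def_of_pos (Real.exp_pos _), Real.log_exp, Real.log_exp]
    · have hI : ind (A (extendPath N ε)) = 0 := ind_of_false hAe
      simp only [hp, hq, hI, mul_zero]
      rcases eq_or_lt_of_le ha with ha0 | ha0
      · rw [← ha0, Real.rpow_zero, one_mul]
        have hb1 : b = 1 := by linarith
        rw [hb1, Real.rpow_one]
      · rw [Real.zero_rpow (ne_of_gt ha0), zero_mul]
  have hSp : 0 < ∑ ε : Fin N → Bool, p ε := sum_weight_pos lam h N A ω₁ hpos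
  have hSq : 0 < ∑ ε : Fin N → Bool, q ε := sum_weight_pos lam h N A ω₂ hpos
  set Sp := ∑ ε : Fin N → Bool, p ε
  set Sq := ∑ ε : Fin N → Bool, q ε
  have hhold : ∑ ε : Fin N → Bool, p ε ^ a * q ε ^ b ≤ Sp ^ a * Sq ^ b := by
    have h1 : ∑ ε : Fin N → Bool, (p ε / Sp) ^ a * (q ε / Sq) ^ b ≤ 1 := by
      calc ∑ ε : Fin N → Bool, (p ε / Sp) ^ a * (q ε / Sq) ^ b
          ≤ ∑ ε : Fin N → Bool, (a * (p ε / Sp) + b * (q ε / Sq)) :=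
            Finset.sum_le_sum fun ε _ =>
              Real.geom_mean_le_arith_mean2_weighted ha hb
                (div_nonneg (hpnn ε) hSp.le) (div_nonneg (hqnn ε) hSq.le) hab
        _ = a * (Sp / Sp) + b * (Sq / Sq) := by
            rw [Finset.sum_add_distrib, ← Finset.mul_sum, ← Finset.mul_sum,
              ← Finset.sum_div, ← Finset.sum_div]
        _ = 1 := by rw [div_self (ne_of_gt hSp), div_self (ne_of_gt hSq), mul_one, mul_one, hab]
    have h2 : ∀ ε : Fin N → Bool, (p ε / Sp) ^ a * (q ε / Sq) ^ b =
        p ε ^ a * q ε ^ b / (Sp ^ a * Sq ^ b) := fun ε => by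
      rw [Real.div_rpow (hpnn ε) hSp.le, Real.div_rpow (hqnn ε) hSq.le]
      ring
    simp only [h2] at h1
    rw [← Finset.sum_div] at h1
    have hden : 0 < Sp ^ a * Sq ^ b :=
      mul_pos (Real.rpow_pos_of_pos hSp _) (Real.rpow_pos_of_pos hSq _)
    calc ∑ ε : Fin N → Bool, p ε ^ a * q ε ^ b
        = (∑ ε : Fin N → Bool, p ε ^ a * q ε ^ b) / (Sp ^ a * Sq ^ b) * (Sp ^ a * Sq ^ b) := by
          field_simp
      _ ≤ 1 * (Sp ^ a * Sq ^ b) := mul_le_mul_of_nonneg_right h1 hden.le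
      _ = Sp ^ a * Sq ^ b := one_mul _
  have hc : (0 : ℝ) < (1 / 2 : ℝ) ^ N := by positivity
  have hcab : ((1 / 2 : ℝ) ^ N) = ((1 / 2 : ℝ) ^ N) ^ a * ((1 / 2 : ℝ) ^ N) ^ b := by
    rw [← Real.rpow_add hc, hab, Real.rpow_one]
  have hZ1 : Zev lam h N ω₁ A = (1 / 2 : ℝ) ^ N * Sp := rfl
  have hZ2 : Zev lam h N ω₂ A = (1 / 2 : ℝ) ^ N * Sq := rfl
  have hZmix : Zev lam h N (fun n => a * ω₁ n + b * ω₂ n) A =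
      (1 / 2 : ℝ) ^ N * ∑ ε : Fin N → Bool, p ε ^ a * q ε ^ b := by
    unfold Zev pathE
    congr 1
    exact Finset.sum_congr rfl fun ε _ => hterm ε
  rw [hZmix, hZ1, hZ2, Real.mul_rpow hc.le hSp.le, Real.mul_rpow hc.le hSq.le]
  calc (1 / 2 : ℝ) ^ N * ∑ ε : Fin N → Bool, p ε ^ a * q ε ^ b
      ≤ (1 / 2 : ℝ) ^ N * (Sp ^ a * Sq ^ b) := mul_le_mul_of_nonneg_left hhold hc.le
    _ = ((1 / 2 : ℝ) ^ N) ^ a * ((1 / 2 : ℝ) ^ N) ^ b * (Sp ^ a * Sq ^ b) := by rw [← hcab]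
    _ = ((1 / 2 : ℝ) ^ N) ^ a * Sp ^ a * (((1 / 2 : ℝ) ^ N) ^ b * Sq ^ b) := by ring

end AuxLemmas2

section AuxLemmas3
open Real Finset

lemma sum_Icc_shift (N : ℕ) (f : ℕ → ℝ) :
    ∑ n ∈ Finset.Icc 1 N, f n = ∑ k ∈ Finset.range N, f (k + 1) := by
  refine Finset.sum_bij' (fun n _ => n - 1) (fun k _ => k + 1) ?_ ?_ ?_ ?_ ?_
  · intro a ha; simp only [Finset.mem_Icc] at ha; simp only [Finset.mem_range]; omega
  · intro a ha; simp only [Finset.mem_range] at ha; simp only [Finset.mem_Icc]; omega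
  · intro a ha; simp only [Finset.mem_Icc] at ha; omega
  · intro a ha; omega
  · intro a ha
    simp only [Finset.mem_Icc] at ha
    congr 1
    omega

lemma embed_succ (N : ℕ) (x : Fin N → ℝ) (i : Fin N) : embed N x ((i : ℕ) + 1) = x i := by
  unfold embed
  rw [dif_pos ⟨by omega, by omega⟩]
  congr 1

lemma sum_embed_sq (N : ℕ) (x y : Fin N → ℝ) :
    ∑ n ∈ Finset.Icc 1 N, (embed N x n - embed N y n) ^ 2 = ∑ i : Fin N, (x i - y i) ^ 2 := by
  rw [sum_Icc_shift N (fun n => (embed N x n - embed N y n) ^ 2)]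
  rw [← Fin.sum_univ_eq_sum_range (fun k => (embed N x (k + 1) - embed N y (k + 1)) ^ 2) N]
  exact Finset.sum_congr rfl fun i _ => by rw [embed_succ, embed_succ]

lemma zev_embed_eval (lam h : ℝ) (N : ℕ) (A : (ℕ → Bool) → Prop) (ω : ℕ → ℝ) :
    Zev lam h N (embed N (fun i : Fin N => ω ((i : ℕ) + 1))) A = Zev lam h N ω A := by
  apply zev_congr
  intro n hn
  rw [Finset.mem_Icc] at hn
  unfold embed
  rw [dif_pos ⟨hn.1, hn.2⟩]
  show ω ((n - 1) + 1) = ω n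
  congr 1
  omega

lemma g_lip (lam h : ℝ) (hlam : 0 ≤ lam) (N m : ℕ) (A : (ℕ → Bool) → Prop)
    (hA : ∀ ε, A ε → NVis ε N = m)
    (hpos : 0 < pathE N (fun ε => ind (A ε))) (x y : Fin N → ℝ) :
    |Real.log (Zev lam h N (embed N x) A) / N - Real.log (Zev lam h N (embed N y) A) / N| ≤
      2 * lam * Real.sqrt m / N * Real.sqrt (∑ i, (x i - y i) ^ 2) := by
  set D := 2 * lam * Real.sqrt m * Real.sqrt (∑ i, (x i - y i) ^ 2) with hD
  have hxy : Real.log (Zev lam h N (embed N x) A) ≤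
      D + Real.log (Zev lam h N (embed N y) A) := by
    have := log_zev_le lam h hlam N m A hA hpos (embed N x) (embed N y)
    rwa [sum_embed_sq] at this
  have hyx : Real.log (Zev lam h N (embed N y) A) ≤
      D + Real.log (Zev lam h N (embed N x) A) := by
    have := log_zev_le lam h hlam N m A hA hpos (embed N y) (embed N x)
    rw [show (∑ n ∈ Finset.Icc 1 N, (embed N y n - embed N x n) ^ 2) =
        ∑ n ∈ Finset.Icc 1 N, (embed N x n - embed N y n) ^ 2 from
      Finset.sum_congr rfl fun n _ => by ring, sum_embed_sq] at this
    exact this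
  have hdiv : ∀ p q : ℝ, p ≤ D + q → p / N - q / N ≤
      2 * lam * Real.sqrt m / N * Real.sqrt (∑ i, (x i - y i) ^ 2) := by
    intro p q hpq
    rw [div_sub_div_same]
    have h1 : (p - q) / N ≤ D / N := by
      rw [div_eq_mul_inv, div_eq_mul_inv]
      exact mul_le_mul_of_nonneg_right (by linarith) (by positivity)
    calc (p - q) / N ≤ D / N := h1
      _ = 2 * lam * Real.sqrt m / N * Real.sqrt (∑ i, (x i - y i) ^ 2) := by
          rw [hD]; ring
  rw [abs_sub_le_iff]
  exact ⟨hdiv _ _ hxy, hdiv _ _ hyx⟩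

lemma g_convex (lam h : ℝ) (N : ℕ) (A : (ℕ → Bool) → Prop)
    (hpos : 0 < pathE N (fun ε => ind (A ε))) :
    ConvexOn ℝ Set.univ (fun x : Fin N → ℝ => Real.log (Zev lam h N (embed N x) A) / N) := by
  refine ⟨convex_univ, fun x _ y _ a b ha hb hab => ?_⟩
  have hmix : embed N (a • x + b • y) = fun n => a * embed N x n + b * embed N y n := by
    funext n
    unfold embed
    by_cases hn : 1 ≤ n ∧ n ≤ N
    · rw [dif_pos hn, dif_pos hn, dif_pos hn]
      simp [Pi.add_apply, Pi.smul_apply, smul_eq_mul]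
    · rw [dif_neg hn, dif_neg hn, dif_neg hn]; ring
  have hold := zev_holder lam h N A hpos (embed N x) (embed N y) a b ha hb hab
  rw [← hmix] at hold
  have hZx := zev_pos lam h N A (embed N x) hpos
  have hZy := zev_pos lam h N A (embed N y) hpos
  have hZm := zev_pos lam h N A (embed N (a • x + b • y)) hpos
  simp only [smul_eq_mul]
  have hlog : Real.log (Zev lam h N (embed N (a • x + b • y)) A) ≤
      a * Real.log (Zev lam h N (embed N x) A) + b * Real.log (Zev lam h N (embed N y) A) := by
    calc Real.log (Zev lam h N (embed N (a • x + b • y)) A)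
        ≤ Real.log (Zev lam h N (embed N x) A ^ a * Zev lam h N (embed N y) A ^ b) :=
          Real.log_le_log hZm hold
      _ = a * Real.log (Zev lam h N (embed N x) A) + b * Real.log (Zev lam h N (embed N y) A) := by
          rw [Real.log_mul (ne_of_gt (Real.rpow_pos_of_pos hZx a))
            (ne_of_gt (Real.rpow_pos_of_pos hZy b)), Real.log_rpow hZx, Real.log_rpow hZy]
  calc Real.log (Zev lam h N (embed N (a • x + b • y)) A) / N
      ≤ (a * Real.log (Zev lam h N (embed N x) A) +
          b * Real.log (Zev lam h N (embed N y) A)) / N := by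
        rw [div_eq_mul_inv, div_eq_mul_inv]
        exact mul_le_mul_of_nonneg_right hlog (by positivity)
    _ = a * (Real.log (Zev lam h N (embed N x) A) / N) +
        b * (Real.log (Zev lam h N (embed N y) A) / N) := by ring

end AuxLemmas3

section AuxLemmas4
open Real Finset MeasureTheory

lemma sqrt_sum_sq_le {α : Type*} (s : Finset α) (f : α → ℝ) :
    Real.sqrt (∑ i ∈ s, f i ^ 2) ≤ ∑ i ∈ s, |f i| := by
  rw [show (∑ i ∈ s, f i ^ 2) = ∑ i ∈ s, |f i| ^ 2 from
    Finset.sum_congr rfl fun i _ => (sq_abs _).symm]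
  have h1 : ∑ i ∈ s, |f i| ^ 2 ≤ (∑ i ∈ s, |f i|) ^ 2 :=
    Finset.sum_sq_le_sq_sum_of_nonneg fun i _ => abs_nonneg _
  calc Real.sqrt (∑ i ∈ s, |f i| ^ 2) ≤ Real.sqrt ((∑ i ∈ s, |f i|) ^ 2) :=
        Real.sqrt_le_sqrt h1
    _ = abs (∑ i ∈ s, |f i|) := Real.sqrt_sq_eq_abs _
    _ = ∑ i ∈ s, |f i| := abs_of_nonneg (Finset.sum_nonneg fun i _ => abs_nonneg _)

lemma integrable_coord {mu : Measure ℝ} {P : Measure (ℕ → ℝ)} (hsetup : BasicSetup mu P)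
    (n : ℕ) : Integrable (fun ω : ℕ → ℝ => ω n) P := by
  obtain ⟨hmu, hP, -, hvar, -, hmap, -⟩ := hsetup
  haveI := hmu
  have hx2 : Integrable (fun x : ℝ => x ^ 2) mu := by
    by_contra hc
    rw [MeasureTheory.integral_undef hc] at hvar
    norm_num at hvar
  have hid : Integrable (fun x : ℝ => x) mu := by
    refine Integrable.mono' ((integrable_const (1 : ℝ)).add hx2)
      measurable_id.aestronglyMeasurable (Filter.Eventually.of_forall fun x => ?_)
    show ‖x‖ ≤ 1 + x ^ 2
    rw [Real.norm_eq_abs]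
    nlinarith [sq_nonneg (|x| - 1), sq_abs x, abs_nonneg x]
  have hmapped : Integrable (fun x : ℝ => x) (P.map (fun ω => ω n)) := by
    rw [hmap n]; exact hid
  exact (MeasureTheory.integrable_map_measure measurable_id.aestronglyMeasurable
    (measurable_pi_apply n).aemeasurable).mp hmapped

lemma measurable_zev (lam h : ℝ) (N : ℕ) (A : (ℕ → Bool) → Prop) :
    Measurable (fun ω : ℕ → ℝ => Zev lam h N ω A) := by
  unfold Zev pathE weight
  refine Measurable.const_mul (Finset.measurable_sum _ fun ε _ => ?_) _
  refine Measurable.mul_const ?_ _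
  refine Real.measurable_exp.comp (Measurable.const_mul ?_ _)
  exact Finset.measurable_sum _ fun n _ => (measurable_pi_apply n).add measurable_const

lemma integrable_logZ {mu : Measure ℝ} {P : Measure (ℕ → ℝ)} (hsetup : BasicSetup mu P)
    (lam h : ℝ) (hlam : 0 ≤ lam) (N m : ℕ) (A : (ℕ → Bool) → Prop)
    (hA : ∀ ε, A ε → NVis ε N = m)
    (hpos : 0 < pathE N (fun ε => ind (A ε))) :
    Integrable (fun ω : ℕ → ℝ => Real.log (Zev lam h N ω A) / N) P := by
  haveI := hsetup.2.1
  set c₀ : ℝ := Real.log (Zev lam h N (embed N (0 : Fin N → ℝ)) A) / N with hc₀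
  set K : ℝ := 2 * lam * Real.sqrt m / N with hKdef
  have hKnn : 0 ≤ K := by rw [hKdef]; positivity
  have hmeas : AEStronglyMeasurable (fun ω : ℕ → ℝ => Real.log (Zev lam h N ω A) / N) P :=
    ((Real.measurable_log.comp (measurable_zev lam h N A)).div_const _).aestronglyMeasurable
  have hmaj : Integrable
      (fun ω : ℕ → ℝ => |c₀| + K * ∑ i : Fin N, |ω ((i : ℕ) + 1)|) P := by
    refine (integrable_const _).add (Integrable.const_mul ?_ _)
    exact integrable_finset_sum _ fun i _ => (integrable_coord hsetup _).abs
  refine hmaj.mono' hmeas (Filter.Eventually.of_forall fun ω => ?_)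
  rw [Real.norm_eq_abs]
  have hlip := g_lip lam h hlam N m A hA hpos (fun i : Fin N => ω ((i : ℕ) + 1)) 0
  rw [zev_embed_eval] at hlip
  simp only [Pi.zero_apply, sub_zero] at hlip
  have hsq : Real.sqrt (∑ i : Fin N, (ω ((i : ℕ) + 1)) ^ 2) ≤
      ∑ i : Fin N, |ω ((i : ℕ) + 1)| := sqrt_sum_sq_le _ _
  have habs : |Real.log (Zev lam h N ω A) / ↑N| ≤
      |c₀| + |Real.log (Zev lam h N ω A) / ↑N - c₀| := by
    calc |Real.log (Zev lam h N ω A) / ↑N|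
        = |c₀ + (Real.log (Zev lam h N ω A) / ↑N - c₀)| := by ring_nf
      _ ≤ |c₀| + |Real.log (Zev lam h N ω A) / ↑N - c₀| := abs_add_le _ _
  have hKmul : K * Real.sqrt (∑ i : Fin N, (ω ((i : ℕ) + 1)) ^ 2) ≤
      K * ∑ i : Fin N, |ω ((i : ℕ) + 1)| := mul_le_mul_of_nonneg_left hsq hKnn
  have hlip' : |Real.log (Zev lam h N ω A) / ↑N - c₀| ≤
      K * Real.sqrt (∑ i : Fin N, (ω ((i : ℕ) + 1)) ^ 2) := hlip
  linarith

end AuxLemmas4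

/-- Concentration lemma for restricted free energies.
If the disorder satisfies the deviation inequality with constant `C`, `N` is even,
`m ∈ {0,2,…,N}`, and `Ω_m` is a set of paths of positive probability on which `𝒩 = m`,
then for every `u ≥ 0`,
`P( F_{N,ω}(Ω_m) - 𝔼[F_{N,ω}(Ω_m)] ≥ u ) ≤ C exp(-u²N²/(4Cλ²m))`. -/
theorem concentration_restricted_free_energy
    (mu : Measure ℝ) (P : Measure (ℕ → ℝ)) (hsetup : BasicSetup mu P)
    (C : ℝ) (hdev : DevIneq P C)
    (lam h : ℝ) (hlam : 0 ≤ lam) (hh : 0 ≤ h)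
    (N m : ℕ) (hN : Even N) (hm : Even m) (hmN : m ≤ N)
    (A : (ℕ → Bool) → Prop) (hA : ∀ ε, A ε → NVis ε N = m)
    (hpos : 0 < pathE N (fun ε => ind (A ε))) :
    ∀ u : ℝ, 0 ≤ u →
      (P {ω | (∫ ω', Real.log (Zev lam h N ω' A) / N ∂P) + u
          ≤ Real.log (Zev lam h N ω A) / N}).toReal
        ≤ C * Real.exp (-(u ^ 2 * (N : ℝ) ^ 2) / (4 * C * lam ^ 2 * m)) := by
  intro u hu
  set g : (Fin N → ℝ) → ℝ := fun x => Real.log (Zev lam h N (embed N x) A) / N with hg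
  have hgω : ∀ ω : ℕ → ℝ,
      g (fun i : Fin N => ω ((i : ℕ) + 1)) = Real.log (Zev lam h N ω A) / N := by
    intro ω
    rw [hg]
    simp only
    rw [zev_embed_eval]
  have hK : (0 : ℝ) ≤ 2 * lam * Real.sqrt m / N := by positivity
  have hconv : ConvexOn ℝ Set.univ g := g_convex lam h N A hpos
  have hlip : ∀ x y : Fin N → ℝ,
      |g x - g y| ≤ 2 * lam * Real.sqrt m / N * Real.sqrt (∑ i, (x i - y i) ^ 2) :=
    fun x y => g_lip lam h hlam N m A hA hpos x y
  have hint : Integrable (fun ω : ℕ → ℝ => g (fun i => ω (i + 1))) P := by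
    simp only [hgω]
    exact integrable_logZ hsetup lam h hlam N m A hA hpos
  have happ := hdev.2 N g (2 * lam * Real.sqrt m / N) hK hconv hlip hint u hu
  simp only [hgω] at happ
  have hexp : -u ^ 2 / (C * (2 * lam * Real.sqrt m / N) ^ 2) =
      -(u ^ 2 * (N : ℝ) ^ 2) / (4 * C * lam ^ 2 * m) := by
    have hs : Real.sqrt m ^ 2 = (m : ℝ) := Real.sq_sqrt (Nat.cast_nonneg m)
    rw [div_pow, mul_pow, mul_pow, hs]
    rw [show C * (2 ^ 2 * lam ^ 2 * (m : ℝ) / (N : ℝ) ^ 2) =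
        4 * C * lam ^ 2 * m / (N : ℝ) ^ 2 by ring]
    rw [div_div_eq_mul_div]
    ring
  rw [hexp] at happ
  exact happ
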